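/- arXiv:2006.03665 — 3 statements merged into one kernel-verified Lean document; each statement's English description precedes it below -/
import Mathlib

section
/- For all octonions a, b, c, the identity Re(b·((conj(a)·a)·c)) = Re((b·conj(a))·(a·c)) holds, where Re denotes the real part. -/
noncomputable section

/-- Octonions as the Cayley–Dickson double of the quaternions. -/
abbrev O := Quaternion ℝ × Quaternion ℝ

/-- Cayley–Dickson multiplication: (a,b)·(c,d) = (ac − d·conj(b), conj(a)·d + c·b). -/
def omul (x y : O) : O := (x.1 * y.1 - y.2 * star x.2, star x.1 * y.2 + y.1 * x.2)

/-- Octonionic conjugation: conj (a,b) = (conj a, −b). -/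
def oconj (x : O) : O := (star x.1, -x.2)

/-- The unit 1 = (1,0). -/
def oone : O := (1, 0)

/-- Euclidean norm: |(a,b)| = sqrt(|a|² + |b|²). -/
def onorm (x : O) : ℝ := Real.sqrt (‖x.1‖^2 + ‖x.2‖^2)

/-- The real part of an octonion (a,b) is the real part of a. -/
def oRe (x : O) : ℝ := x.1.re

/-- Re(b·((conj a·a)·c)) = Re((b·conj a)·(a·c)). -/
theorem octonion_re_identity :
    ∀ a b c : O, oRe (omul b (omul (omul (oconj a) a) c)) = oRe (omul (omul b (oconj a)) (omul a c)) := by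
  rintro ⟨a, a'⟩ ⟨b, b'⟩ ⟨c, c'⟩
  simp only [omul, oconj, oRe, Quaternion.re_sub, Quaternion.re_mul, Quaternion.imI_mul,
    Quaternion.imJ_mul, Quaternion.imK_mul, Quaternion.re_star, Quaternion.imI_star,
    Quaternion.imJ_star, Quaternion.imK_star, Quaternion.re_neg, Quaternion.imI_neg,
    Quaternion.imJ_neg, Quaternion.imK_neg, Quaternion.imI_sub, Quaternion.imJ_sub,
    Quaternion.imK_sub, Quaternion.re_add, Quaternion.imI_add, Quaternion.imJ_add,
    Quaternion.imK_add]
  ring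
end
end

section
/- The octonionic function f(z) = x₁ − x₂·e₄ (where z = x₀ + Σ x_i e_i) satisfies the left octonionic Cauchy–Riemann equation D f = ∂f/∂x₀ + Σ_{i=1}^7 e_i·(∂f/∂x_i) = 0, but the function g(z) = f(z)·e₃ satisfies D g = 2e₅ ≠ 0. Hence left octonion-monogenic functions do not form a right O-module. -/
noncomputable section

def qi : Quaternion ℝ := ⟨0,1,0,0⟩
def qj : Quaternion ℝ := ⟨0,0,1,0⟩

/-- The standard octonion basis 1, e₁, …, e₇ with e₁ = (i,0), e₂ = (j,0), e₃ = (0,1),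
    e₄ = e₁e₂, e₅ = e₁e₃, e₆ = e₂e₃, e₇ = (e₁e₂)e₃. -/
def basis8 : Fin 8 → O := ![oone, (qi,0), (qj,0), ((0:Quaternion ℝ),1),
  omul (qi,0) (qj,0), omul (qi,0) (0,1), omul (qj,0) (0,1), omul (omul (qi,0) (qj,0)) (0,1)]

/-- The real coordinates x₀,…,x₇ of z = x₀ + Σ xᵢeᵢ with respect to `basis8`. -/
def coord : Fin 8 → O → ℝ :=
  ![fun z => z.1.re, fun z => z.1.imI, fun z => z.1.imJ, fun z => z.2.re,
    fun z => z.1.imK, fun z => -z.2.imI, fun z => -z.2.imJ, fun z => -z.2.imK]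

/-- Left octonionic Cauchy–Riemann operator D f = ∂f/∂x₀ + Σᵢ eᵢ·(∂f/∂xᵢ). -/
def Dleft (f : O → O) (z : O) : O :=
  fderiv ℝ f z (basis8 0) + ∑ i : Fin 7, omul (basis8 i.succ) (fderiv ℝ f z (basis8 i.succ))

/-- Right octonionic Cauchy–Riemann operator f D = ∂f/∂x₀ + Σᵢ (∂f/∂xᵢ)·eᵢ. -/
def Dright (f : O → O) (z : O) : O :=
  fderiv ℝ f z (basis8 0) + ∑ i : Fin 7, omul (fderiv ℝ f z (basis8 i.succ)) (basis8 i.succ)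

/-- Fueter polynomials Zᵢ(z) = xᵢ − x₀eᵢ. -/
def Zp (i : Fin 8) (z : O) : O := coord i z • oone - coord 0 z • basis8 i

open Quaternion

-- auxiliary
def cI : O →ₗ[ℝ] ℝ :=
  ((QuaternionAlgebra.imIₗ (-1 : ℝ) (0 : ℝ) (-1 : ℝ)).comp (LinearMap.fst ℝ (Quaternion ℝ) (Quaternion ℝ)))
def cJ : O →ₗ[ℝ] ℝ :=
  ((QuaternionAlgebra.imJₗ (-1 : ℝ) (0 : ℝ) (-1 : ℝ)).comp (LinearMap.fst ℝ (Quaternion ℝ) (Quaternion ℝ)))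
def Flin : O →ₗ[ℝ] O := cI.smulRight oone - cJ.smulRight (basis8 4)
def F : O →L[ℝ] O := LinearMap.toContinuousLinearMap Flin
def Glin : O →ₗ[ℝ] O := cI.smulRight ((0:Quaternion ℝ), (1:Quaternion ℝ))
  + cJ.smulRight ((0:Quaternion ℝ), qi * qj)
def G : O →L[ℝ] O := LinearMap.toContinuousLinearMap Glin

def qk : Quaternion ℝ := ⟨0,0,0,1⟩
@[simp] lemma qi_re : qi.re = 0 := rfl
@[simp] lemma qi_imI : qi.imI = 1 := rfl
@[simp] lemma qi_imJ : qi.imJ = 0 := rfl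
@[simp] lemma qi_imK : qi.imK = 0 := rfl
@[simp] lemma qj_re : qj.re = 0 := rfl
@[simp] lemma qj_imI : qj.imI = 0 := rfl
@[simp] lemma qj_imJ : qj.imJ = 1 := rfl
@[simp] lemma qj_imK : qj.imK = 0 := rfl
@[simp] lemma qk_re : qk.re = 0 := rfl
@[simp] lemma qk_imI : qk.imI = 0 := rfl
@[simp] lemma qk_imJ : qk.imJ = 0 := rfl
@[simp] lemma qk_imK : qk.imK = 1 := rfl

lemma b0 : basis8 0 = ((1 : Quaternion ℝ), 0) := rfl
lemma b1 : basis8 (Fin.succ (0 : Fin 7)) = (qi, 0) := rfl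
lemma b2 : basis8 (Fin.succ (1 : Fin 7)) = (qj, 0) := rfl
lemma b3 : basis8 (Fin.succ (2 : Fin 7)) = ((0 : Quaternion ℝ), 1) := rfl
lemma b4 : basis8 (Fin.succ (3 : Fin 7)) = (qk, 0) := by
  show omul (qi, 0) (qj, 0) = _
  simp only [omul, Prod.mk.injEq]
  constructor
  · ext <;> simp [Quaternion.re_mul, Quaternion.imI_mul,
      Quaternion.imJ_mul, Quaternion.imK_mul]
  · ext <;> simp
lemma b5 : basis8 (Fin.succ (4 : Fin 7)) = ((0 : Quaternion ℝ), -qi) := by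
  show omul (qi, 0) (0, 1) = _
  simp only [omul, Prod.mk.injEq]
  constructor
  · ext <;> simp
  · ext <;> simp
lemma b6 : basis8 (Fin.succ (5 : Fin 7)) = ((0 : Quaternion ℝ), -qj) := by
  show omul (qj, 0) (0, 1) = _
  simp only [omul, Prod.mk.injEq]
  constructor
  · ext <;> simp
  · ext <;> simp
lemma b7 : basis8 (Fin.succ (6 : Fin 7)) = ((0 : Quaternion ℝ), -qk) := by
  show omul (omul (qi,0) (qj,0)) (0, 1) = _
  simp only [omul, Prod.mk.injEq]
  constructor
  · ext <;> simp [Quaternion.re_mul, Quaternion.imI_mul,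
      Quaternion.imJ_mul, Quaternion.imK_mul]
  · ext <;> simp [Quaternion.re_mul, Quaternion.imI_mul,
      Quaternion.imJ_mul, Quaternion.imK_mul]
lemma b3' : basis8 3 = ((0 : Quaternion ℝ), 1) := rfl
lemma b4' : basis8 4 = (qk, 0) := b4
lemma b5' : basis8 5 = ((0 : Quaternion ℝ), -qi) := b5

lemma cI_apply (w : O) : cI w = w.1.imI := rfl
lemma cJ_apply (w : O) : cJ w = w.1.imJ := rfl

lemma hF : ∀ w, F w = Flin w := fun w => congrFun (LinearMap.coe_toContinuousLinearMap' Flin) w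
lemma hG : ∀ w, G w = Glin w := fun w => congrFun (LinearMap.coe_toContinuousLinearMap' Glin) w

lemma f_eq : (fun w : O => coord 1 w • oone - coord 2 w • basis8 4) = F := by
  funext w
  rw [hF]
  simp only [Flin, coord, LinearMap.sub_apply, LinearMap.smulRight_apply, cI_apply, cJ_apply,
    Matrix.cons_val_one, Matrix.head_cons, Matrix.cons_val_zero]
  norm_num [Matrix.cons_val_two, Matrix.tail_cons]

lemma g_eq : (fun w : O => omul (coord 1 w • oone - coord 2 w • basis8 4) (basis8 3)) = G := by
  funext w
  rw [hG]
  simp only [Glin, Flin, coord, b3', b4', oone, omul,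
    Matrix.cons_val_one, Matrix.head_cons, Matrix.cons_val_zero,
    LinearMap.add_apply, LinearMap.sub_apply, LinearMap.smulRight_apply,
    cI_apply, cJ_apply]
  refine Prod.ext ?_ ?_ <;>
    · ext <;>
        simp [Quaternion.re_mul, Quaternion.imI_mul,
          Quaternion.imJ_mul, Quaternion.imK_mul]

set_option maxHeartbeats 1000000 in
/-- f(z) = x₁ − x₂e₄ is left monogenic but g = f·e₃ is not: D g = 2e₅ ≠ 0.
    Hence left octonion-monogenic functions do not form a right O-module. -/
theorem left_monogenic_not_right_module :
    (∀ z : O, Dleft (fun w => coord 1 w • oone - coord 2 w • basis8 4) z = 0) ∧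
    (∀ z : O, Dleft (fun w => omul (coord 1 w • oone - coord 2 w • basis8 4) (basis8 3)) z
        = (2:ℝ) • basis8 5) ∧
    ((2:ℝ) • basis8 5 ≠ (0 : O)) ∧
    ¬ (∀ h : O → O, (∀ z : O, Dleft h z = 0) →
        ∀ z : O, Dleft (fun w => omul (h w) (basis8 3)) z = 0) := by
  have h5 : (2:ℝ) • basis8 5 ≠ (0 : O) := by
    rw [b5']
    intro h
    have := congrArg (fun p : O => p.2.imI) h
    simp at this
  have h1 : ∀ z : O, Dleft (fun w => coord 1 w • oone - coord 2 w • basis8 4) z = 0 := by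
    intro z
    rw [Dleft, f_eq, F.fderiv]
    simp only [Fin.sum_univ_seven, b0, b1, b2, b3, b4, b5, b6, b7, hF]
    simp only [Flin, oone, b3', b4',
      LinearMap.add_apply, LinearMap.sub_apply, LinearMap.smulRight_apply,
      cI_apply, cJ_apply]
    refine Prod.ext ?_ ?_ <;>
      · show _ = (0 : Quaternion ℝ)
        simp only [omul]
        ext <;>
          simp [Quaternion.re_mul, Quaternion.imI_mul,
            Quaternion.imJ_mul, Quaternion.imK_mul]
  have h2 : ∀ z : O, Dleft (fun w => omul (coord 1 w • oone - coord 2 w • basis8 4) (basis8 3)) z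
      = (2:ℝ) • basis8 5 := by
    intro z
    rw [Dleft, g_eq, G.fderiv]
    simp only [Fin.sum_univ_seven, b0, b1, b2, b3, b4, b5, b6, b7, b5', hG]
    simp only [Glin, b3', b4',
      LinearMap.add_apply, LinearMap.sub_apply, LinearMap.smulRight_apply,
      cI_apply, cJ_apply]
    refine Prod.ext ?_ ?_ <;>
      · simp only [omul, Prod.fst, Prod.snd]
        ext <;>
          simp [Quaternion.re_mul, Quaternion.imI_mul,
            Quaternion.imJ_mul, Quaternion.imK_mul] <;> ring
  refine ⟨h1, h2, h5, fun hmod => ?_⟩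
  have := hmod _ h1 0
  rw [h2 0] at this
  exact h5 this
end
end

section
/- The function f(z) = Z₁(z)² + Z₂(z)² + ⋯ + Z₇(z)², where Z_i(z) = x_i − x₀e_i, equals (x₁² + ⋯ + x₇² − 7x₀²) − 2Σ_{i=1}^7 x₀x_i e_i, is left octonion-monogenic, and its only zero in O is z = 0. -/
noncomputable section

section aux

set_option maxHeartbeats 1000000 in
lemma omul_explicit (a0 a1 a2 a3 b0 b1 b2 b3 c0 c1 c2 c3 d0 d1 d2 d3 : ℝ) :
    omul (⟨a0,a1,a2,a3⟩, ⟨b0,b1,b2,b3⟩) (⟨c0,c1,c2,c3⟩, ⟨d0,d1,d2,d3⟩) =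
    (⟨a0*c0 - a1*c1 - a2*c2 - a3*c3 - (d0*b0 + d1*b1 + d2*b2 + d3*b3),
      a0*c1 + a1*c0 + a2*c3 - a3*c2 - (-d0*b1 + d1*b0 - d2*b3 + d3*b2),
      a0*c2 - a1*c3 + a2*c0 + a3*c1 - (-d0*b2 + d1*b3 + d2*b0 - d3*b1),
      a0*c3 + a1*c2 - a2*c1 + a3*c0 - (-d0*b3 - d1*b2 + d2*b1 + d3*b0)⟩,
     ⟨a0*d0 + a1*d1 + a2*d2 + a3*d3 + (c0*b0 - c1*b1 - c2*b2 - c3*b3),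
      a0*d1 - a1*d0 - a2*d3 + a3*d2 + (c0*b1 + c1*b0 + c2*b3 - c3*b2),
      a0*d2 + a1*d3 - a2*d0 - a3*d1 + (c0*b2 - c1*b3 + c2*b0 + c3*b1),
      a0*d3 - a1*d2 + a2*d1 - a3*d0 + (c0*b3 + c1*b2 - c2*b1 + c3*b0)⟩) := by
  have H : ∀ p q r s : Quaternion ℝ, omul (p, q) (r, s) =
      (⟨p.re*r.re - p.imI*r.imI - p.imJ*r.imJ - p.imK*r.imK - (s.re*q.re + s.imI*q.imI + s.imJ*q.imJ + s.imK*q.imK),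
        p.re*r.imI + p.imI*r.re + p.imJ*r.imK - p.imK*r.imJ - (-s.re*q.imI + s.imI*q.re - s.imJ*q.imK + s.imK*q.imJ),
        p.re*r.imJ - p.imI*r.imK + p.imJ*r.re + p.imK*r.imI - (-s.re*q.imJ + s.imI*q.imK + s.imJ*q.re - s.imK*q.imI),
        p.re*r.imK + p.imI*r.imJ - p.imJ*r.imI + p.imK*r.re - (-s.re*q.imK - s.imI*q.imJ + s.imJ*q.imI + s.imK*q.re)⟩,
       ⟨p.re*s.re + p.imI*s.imI + p.imJ*s.imJ + p.imK*s.imK + (r.re*q.re - r.imI*q.imI - r.imJ*q.imJ - r.imK*q.imK),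
        p.re*s.imI - p.imI*s.re - p.imJ*s.imK + p.imK*s.imJ + (r.re*q.imI + r.imI*q.re + r.imJ*q.imK - r.imK*q.imJ),
        p.re*s.imJ + p.imI*s.imK - p.imJ*s.re - p.imK*s.imI + (r.re*q.imJ - r.imI*q.imK + r.imJ*q.re + r.imK*q.imI),
        p.re*s.imK - p.imI*s.imJ + p.imJ*s.imI - p.imK*s.re + (r.re*q.imK + r.imI*q.imJ - r.imJ*q.imI + r.imK*q.re)⟩) := by
    intro p q r s
    refine Prod.ext (Quaternion.ext _ _ ?_ ?_ ?_ ?_) (Quaternion.ext _ _ ?_ ?_ ?_ ?_) <;>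
    simp only [omul, Prod.mk.injEq, Quaternion.ext_iff, Quaternion.re_sub, Quaternion.re_add,
      Quaternion.re_mul, Quaternion.imI_mul, Quaternion.imJ_mul, Quaternion.imK_mul,
      Quaternion.imI_sub, Quaternion.imJ_sub, Quaternion.imK_sub, Quaternion.imI_add,
      Quaternion.imJ_add, Quaternion.imK_add, Quaternion.re_star, Quaternion.imI_star,
      Quaternion.imJ_star, Quaternion.imK_star] <;> ring
  exact H _ _ _ _

lemma s0 : (0:Fin 7).succ = (1:Fin 8) := rfl
lemma s1 : (1:Fin 7).succ = (2:Fin 8) := rfl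
lemma s2 : (2:Fin 7).succ = (3:Fin 8) := rfl
lemma s3 : (3:Fin 7).succ = (4:Fin 8) := rfl
lemma s4 : (4:Fin 7).succ = (5:Fin 8) := rfl
lemma s5 : (5:Fin 7).succ = (6:Fin 8) := rfl
lemma s6 : (6:Fin 7).succ = (7:Fin 8) := rfl

lemma coord0 (z : O) : coord 0 z = z.1.re := rfl
lemma coord1 (z : O) : coord 1 z = z.1.imI := rfl
lemma coord2 (z : O) : coord 2 z = z.1.imJ := rfl
lemma coord3 (z : O) : coord 3 z = z.2.re := rfl
lemma coord4 (z : O) : coord 4 z = z.1.imK := rfl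
lemma coord5 (z : O) : coord 5 z = -z.2.imI := rfl
lemma coord6 (z : O) : coord 6 z = -z.2.imJ := rfl
lemma coord7 (z : O) : coord 7 z = -z.2.imK := rfl
lemma coord_add0 (x y : O) : coord 0 (x + y) = coord 0 x + coord 0 y := by
  simp only [coord0, Prod.fst_add, Prod.snd_add, Quaternion.re_add, Quaternion.imI_add,
    Quaternion.imJ_add, Quaternion.imK_add] <;> ring
lemma coord_smul0 (c : ℝ) (x : O) : coord 0 (c • x) = c * coord 0 x := by
  simp only [coord0, Prod.smul_fst, Prod.smul_snd, Quaternion.re_smul, Quaternion.imI_smul,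
    Quaternion.imJ_smul, Quaternion.imK_smul, smul_eq_mul] <;> ring
lemma coord_add1 (x y : O) : coord 1 (x + y) = coord 1 x + coord 1 y := by
  simp only [coord1, Prod.fst_add, Prod.snd_add, Quaternion.re_add, Quaternion.imI_add,
    Quaternion.imJ_add, Quaternion.imK_add] <;> ring
lemma coord_smul1 (c : ℝ) (x : O) : coord 1 (c • x) = c * coord 1 x := by
  simp only [coord1, Prod.smul_fst, Prod.smul_snd, Quaternion.re_smul, Quaternion.imI_smul,
    Quaternion.imJ_smul, Quaternion.imK_smul, smul_eq_mul] <;> ring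
lemma coord_add2 (x y : O) : coord 2 (x + y) = coord 2 x + coord 2 y := by
  simp only [coord2, Prod.fst_add, Prod.snd_add, Quaternion.re_add, Quaternion.imI_add,
    Quaternion.imJ_add, Quaternion.imK_add] <;> ring
lemma coord_smul2 (c : ℝ) (x : O) : coord 2 (c • x) = c * coord 2 x := by
  simp only [coord2, Prod.smul_fst, Prod.smul_snd, Quaternion.re_smul, Quaternion.imI_smul,
    Quaternion.imJ_smul, Quaternion.imK_smul, smul_eq_mul] <;> ring
lemma coord_add3 (x y : O) : coord 3 (x + y) = coord 3 x + coord 3 y := by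
  simp only [coord3, Prod.fst_add, Prod.snd_add, Quaternion.re_add, Quaternion.imI_add,
    Quaternion.imJ_add, Quaternion.imK_add] <;> ring
lemma coord_smul3 (c : ℝ) (x : O) : coord 3 (c • x) = c * coord 3 x := by
  simp only [coord3, Prod.smul_fst, Prod.smul_snd, Quaternion.re_smul, Quaternion.imI_smul,
    Quaternion.imJ_smul, Quaternion.imK_smul, smul_eq_mul] <;> ring
lemma coord_add4 (x y : O) : coord 4 (x + y) = coord 4 x + coord 4 y := by
  simp only [coord4, Prod.fst_add, Prod.snd_add, Quaternion.re_add, Quaternion.imI_add,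
    Quaternion.imJ_add, Quaternion.imK_add] <;> ring
lemma coord_smul4 (c : ℝ) (x : O) : coord 4 (c • x) = c * coord 4 x := by
  simp only [coord4, Prod.smul_fst, Prod.smul_snd, Quaternion.re_smul, Quaternion.imI_smul,
    Quaternion.imJ_smul, Quaternion.imK_smul, smul_eq_mul] <;> ring
lemma coord_add5 (x y : O) : coord 5 (x + y) = coord 5 x + coord 5 y := by
  simp only [coord5, Prod.fst_add, Prod.snd_add, Quaternion.re_add, Quaternion.imI_add,
    Quaternion.imJ_add, Quaternion.imK_add] <;> ring
lemma coord_smul5 (c : ℝ) (x : O) : coord 5 (c • x) = c * coord 5 x := by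
  simp only [coord5, Prod.smul_fst, Prod.smul_snd, Quaternion.re_smul, Quaternion.imI_smul,
    Quaternion.imJ_smul, Quaternion.imK_smul, smul_eq_mul] <;> ring
lemma coord_add6 (x y : O) : coord 6 (x + y) = coord 6 x + coord 6 y := by
  simp only [coord6, Prod.fst_add, Prod.snd_add, Quaternion.re_add, Quaternion.imI_add,
    Quaternion.imJ_add, Quaternion.imK_add] <;> ring
lemma coord_smul6 (c : ℝ) (x : O) : coord 6 (c • x) = c * coord 6 x := by
  simp only [coord6, Prod.smul_fst, Prod.smul_snd, Quaternion.re_smul, Quaternion.imI_smul,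
    Quaternion.imJ_smul, Quaternion.imK_smul, smul_eq_mul] <;> ring
lemma coord_add7 (x y : O) : coord 7 (x + y) = coord 7 x + coord 7 y := by
  simp only [coord7, Prod.fst_add, Prod.snd_add, Quaternion.re_add, Quaternion.imI_add,
    Quaternion.imJ_add, Quaternion.imK_add] <;> ring
lemma coord_smul7 (c : ℝ) (x : O) : coord 7 (c • x) = c * coord 7 x := by
  simp only [coord7, Prod.smul_fst, Prod.smul_snd, Quaternion.re_smul, Quaternion.imI_smul,
    Quaternion.imJ_smul, Quaternion.imK_smul, smul_eq_mul] <;> ring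

lemma coord_add (i : Fin 8) (x y : O) : coord i (x + y) = coord i x + coord i y := by
  fin_cases i
  exacts [coord_add0 x y, coord_add1 x y, coord_add2 x y, coord_add3 x y,
    coord_add4 x y, coord_add5 x y, coord_add6 x y, coord_add7 x y]
lemma coord_smul (i : Fin 8) (c : ℝ) (x : O) : coord i (c • x) = c * coord i x := by
  fin_cases i
  exacts [coord_smul0 c x, coord_smul1 c x, coord_smul2 c x, coord_smul3 c x,
    coord_smul4 c x, coord_smul5 c x, coord_smul6 c x, coord_smul7 c x]

lemma oone_expl : oone = ((⟨1,0,0,0⟩,⟨0,0,0,0⟩) : O) := rfl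
lemma b8_0 : basis8 0 = ((⟨1,0,0,0⟩,⟨0,0,0,0⟩) : O) := rfl
lemma b8_1 : basis8 1 = ((⟨0,1,0,0⟩,⟨0,0,0,0⟩) : O) := rfl
lemma b8_2 : basis8 2 = ((⟨0,0,1,0⟩,⟨0,0,0,0⟩) : O) := rfl
lemma b8_3 : basis8 3 = ((⟨0,0,0,0⟩,⟨1,0,0,0⟩) : O) := rfl
lemma b8_4 : basis8 4 = ((⟨0,0,0,1⟩,⟨0,0,0,0⟩) : O) := by
  show omul _ _ = _
  rw [show ((qi,0):O) = (⟨0,1,0,0⟩,⟨0,0,0,0⟩) from rfl,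
      show ((qj,0):O) = (⟨0,0,1,0⟩,⟨0,0,0,0⟩) from rfl, omul_explicit]
  norm_num
lemma b8_5 : basis8 5 = ((⟨0,0,0,0⟩,⟨0,-1,0,0⟩) : O) := by
  show omul _ _ = _
  rw [show ((qi,0):O) = (⟨0,1,0,0⟩,⟨0,0,0,0⟩) from rfl,
      show (((0:Quaternion ℝ),(1:Quaternion ℝ)):O) = (⟨0,0,0,0⟩,⟨1,0,0,0⟩) from rfl, omul_explicit]
  norm_num
lemma b8_6 : basis8 6 = ((⟨0,0,0,0⟩,⟨0,0,-1,0⟩) : O) := by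
  show omul _ _ = _
  rw [show ((qj,0):O) = (⟨0,0,1,0⟩,⟨0,0,0,0⟩) from rfl,
      show (((0:Quaternion ℝ),(1:Quaternion ℝ)):O) = (⟨0,0,0,0⟩,⟨1,0,0,0⟩) from rfl, omul_explicit]
  norm_num
lemma b8_7 : basis8 7 = ((⟨0,0,0,0⟩,⟨0,0,0,-1⟩) : O) := by
  show omul (omul _ _) _ = _
  rw [show ((qi,0):O) = (⟨0,1,0,0⟩,⟨0,0,0,0⟩) from rfl,
      show ((qj,0):O) = (⟨0,0,1,0⟩,⟨0,0,0,0⟩) from rfl, omul_explicit]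
  norm_num
  rw [show (((0:Quaternion ℝ),(1:Quaternion ℝ)):O) = (⟨0,0,0,0⟩,⟨1,0,0,0⟩) from rfl, omul_explicit]
  norm_num

lemma osmul (r a0 a1 a2 a3 b0 b1 b2 b3 : ℝ) :
    r • ((⟨a0,a1,a2,a3⟩, ⟨b0,b1,b2,b3⟩) : O) =
      (⟨r*a0,r*a1,r*a2,r*a3⟩, ⟨r*b0,r*b1,r*b2,r*b3⟩) := rfl
lemma oadd (a0 a1 a2 a3 b0 b1 b2 b3 c0 c1 c2 c3 d0 d1 d2 d3 : ℝ) :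
    ((⟨a0,a1,a2,a3⟩, ⟨b0,b1,b2,b3⟩) : O) + (⟨c0,c1,c2,c3⟩, ⟨d0,d1,d2,d3⟩) =
      (⟨a0+c0,a1+c1,a2+c2,a3+c3⟩, ⟨b0+d0,b1+d1,b2+d2,b3+d3⟩) := rfl
lemma osub (a0 a1 a2 a3 b0 b1 b2 b3 c0 c1 c2 c3 d0 d1 d2 d3 : ℝ) :
    ((⟨a0,a1,a2,a3⟩, ⟨b0,b1,b2,b3⟩) : O) - (⟨c0,c1,c2,c3⟩, ⟨d0,d1,d2,d3⟩) =
      (⟨a0-c0,a1-c1,a2-c2,a3-c3⟩, ⟨b0-d0,b1-d1,b2-d2,b3-d3⟩) := rfl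
lemma ozero : (0 : O) = ((⟨0,0,0,0⟩,⟨0,0,0,0⟩) : O) := rfl

set_option maxHeartbeats 4000000 in
lemma part1 (z : O) : (∑ i : Fin 7, omul (Zp i.succ z) (Zp i.succ z))
        = ((∑ i : Fin 7, coord i.succ z ^ 2) - 7 * coord 0 z ^ 2) • oone
          - ∑ i : Fin 7, (2 * coord 0 z * coord i.succ z) • basis8 i.succ := by
  simp only [Fin.sum_univ_seven, s0, s1, s2, s3, s4, s5, s6, Zp,
    coord0, coord1, coord2, coord3, coord4, coord5, coord6, coord7,
    b8_1, b8_2, b8_3, b8_4, b8_5, b8_6, b8_7, oone_expl,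
    osmul, osub, oadd, omul_explicit]
  rw [Prod.ext_iff]
  constructor <;> rw [Quaternion.ext_iff] <;>
    refine ⟨by ring, by ring, by ring, by ring⟩

def omulLin : O →ₗ[ℝ] O →ₗ[ℝ] O := LinearMap.mk₂ ℝ omul
  (fun x y z => by simp [omul, Prod.ext_iff, add_mul, mul_add]; constructor <;> abel)
  (fun c x y => by simp [omul, Prod.ext_iff, smul_sub, smul_add, mul_smul_comm, smul_mul_assoc])
  (fun x y z => by simp [omul, Prod.ext_iff, add_mul, mul_add]; constructor <;> abel)
  (fun c x y => by simp [omul, Prod.ext_iff, smul_sub, smul_add, mul_smul_comm, smul_mul_assoc])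

def omulCLM : O →L[ℝ] O →L[ℝ] O :=
  LinearMap.toContinuousLinearMap
    (((LinearMap.toContinuousLinearMap (𝕜 := ℝ) (E := O) (F' := O)) :
        (O →ₗ[ℝ] O) →ₗ[ℝ] (O →L[ℝ] O)).comp omulLin)

@[simp] lemma omulCLM_apply (x y : O) : omulCLM x y = omul x y := by
  simp [omulCLM, omulLin]

def ZpL (i : Fin 8) : O →L[ℝ] O :=
  LinearMap.toContinuousLinearMap
    { toFun := Zp i
      map_add' := fun x y => by
        simp only [Zp, coord_add, add_smul]; abel
      map_smul' := fun c x => by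
        simp only [Zp, coord_smul, RingHom.id_apply, smul_sub, ← smul_smul, smul_eq_mul] }

@[simp] lemma ZpL_apply (i : Fin 8) (w : O) : ZpL i w = Zp i w := by
  simp [ZpL]

lemma hasf (z : O) : HasFDerivAt (fun w => ∑ i : Fin 7, omul (Zp i.succ w) (Zp i.succ w))
    (∑ i : Fin 7, ((omulCLM.isBoundedBilinearMap).deriv (ZpL i.succ z, ZpL i.succ z)).comp
      ((ZpL i.succ).prod (ZpL i.succ))) z := by
  apply HasFDerivAt.fun_sum
  intro i _
  have hfun : (fun w => omul (Zp i.succ w) (Zp i.succ w))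
      = (fun p : O × O => omulCLM p.1 p.2) ∘ (fun w => ((ZpL i.succ) w, (ZpL i.succ) w)) := by
    funext w; simp [Function.comp]
  rw [hfun]
  exact ((omulCLM.isBoundedBilinearMap).hasFDerivAt (ZpL i.succ z, ZpL i.succ z)).comp z
    (((ZpL i.succ).prod (ZpL i.succ)).hasFDerivAt)

lemma fderiv_f (z v : O) :
    fderiv ℝ (fun w => ∑ i : Fin 7, omul (Zp i.succ w) (Zp i.succ w)) z v
      = ∑ i : Fin 7, (omul (Zp i.succ v) (Zp i.succ z) + omul (Zp i.succ z) (Zp i.succ v)) := by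
  rw [(hasf z).fderiv]
  simp only [ContinuousLinearMap.coe_sum', Finset.sum_apply, ContinuousLinearMap.coe_comp',
    Function.comp_apply, ContinuousLinearMap.prod_apply, IsBoundedBilinearMap.deriv_apply,
    ZpL_apply, omulCLM_apply]
  exact Finset.sum_congr rfl fun i _ => add_comm _ _

end aux

section aux2
lemma coordp0 (a0 a1 a2 a3 b0 b1 b2 b3 : ℝ) :
    coord 0 ((⟨a0,a1,a2,a3⟩,⟨b0,b1,b2,b3⟩) : O) = a0 := rfl
lemma coordp1 (a0 a1 a2 a3 b0 b1 b2 b3 : ℝ) :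
    coord 1 ((⟨a0,a1,a2,a3⟩,⟨b0,b1,b2,b3⟩) : O) = a1 := rfl
lemma coordp2 (a0 a1 a2 a3 b0 b1 b2 b3 : ℝ) :
    coord 2 ((⟨a0,a1,a2,a3⟩,⟨b0,b1,b2,b3⟩) : O) = a2 := rfl
lemma coordp3 (a0 a1 a2 a3 b0 b1 b2 b3 : ℝ) :
    coord 3 ((⟨a0,a1,a2,a3⟩,⟨b0,b1,b2,b3⟩) : O) = b0 := rfl
lemma coordp4 (a0 a1 a2 a3 b0 b1 b2 b3 : ℝ) :
    coord 4 ((⟨a0,a1,a2,a3⟩,⟨b0,b1,b2,b3⟩) : O) = a3 := rfl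
lemma coordp5 (a0 a1 a2 a3 b0 b1 b2 b3 : ℝ) :
    coord 5 ((⟨a0,a1,a2,a3⟩,⟨b0,b1,b2,b3⟩) : O) = -b1 := rfl
lemma coordp6 (a0 a1 a2 a3 b0 b1 b2 b3 : ℝ) :
    coord 6 ((⟨a0,a1,a2,a3⟩,⟨b0,b1,b2,b3⟩) : O) = -b2 := rfl
lemma coordp7 (a0 a1 a2 a3 b0 b1 b2 b3 : ℝ) :
    coord 7 ((⟨a0,a1,a2,a3⟩,⟨b0,b1,b2,b3⟩) : O) = -b3 := rfl

lemma omul_add_right (x y w : O) : omul w (x + y) = omul w x + omul w y := by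
  simp [omul, Prod.ext_iff, add_mul, mul_add]; constructor <;> abel
lemma omul_sub_left (x y w : O) : omul (x - y) w = omul x w - omul y w := by
  simp [omul, Prod.ext_iff, sub_mul, mul_sub]; constructor <;> abel
lemma omul_sub_right (x y w : O) : omul w (x - y) = omul w x - omul w y := by
  simp [omul, Prod.ext_iff, sub_mul, mul_sub]; constructor <;> abel
lemma omul_smul_left (c : ℝ) (x w : O) : omul (c • x) w = c • omul x w := by
  simp [omul, Prod.ext_iff, smul_sub, smul_add, mul_smul_comm, smul_mul_assoc]
lemma omul_smul_right (c : ℝ) (x w : O) : omul w (c • x) = c • omul w x := by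
  simp [omul, Prod.ext_iff, smul_sub, smul_add, mul_smul_comm, smul_mul_assoc]
lemma omul_oone_left (x : O) : omul oone x = x := by
  simp [omul, oone]
lemma omul_oone_right (x : O) : omul x oone = x := by
  simp [omul, oone]
lemma omul_zero_left (x : O) : omul 0 x = 0 := by
  simp [omul, Prod.ext_iff]
lemma omul_zero_right (x : O) : omul x 0 = 0 := by
  simp [omul, Prod.ext_iff]
lemma omul_neg_left (x w : O) : omul (-x) w = -omul x w := by
  simp [omul, Prod.ext_iff, neg_mul, mul_neg]; constructor <;> abel
lemma omul_neg_right (x w : O) : omul w (-x) = -omul w x := by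
  simp [omul, Prod.ext_iff, neg_mul, mul_neg]; constructor <;> abel

lemma comm_key (e : O) (x y : ℝ) :
    omul e (x • oone - y • e) = omul (x • oone - y • e) e := by
  rw [omul_sub_right, omul_sub_left, omul_smul_right, omul_smul_left,
    omul_smul_right, omul_smul_left, omul_oone_left, omul_oone_right]

lemma Zb0_1 : Zp 1 (basis8 0) = -basis8 1 := by
  rw [Zp, b8_0, coordp1, coordp0]
  norm_num
lemma Zb0_2 : Zp 2 (basis8 0) = -basis8 2 := by
  rw [Zp, b8_0, coordp2, coordp0]
  norm_num
lemma Zb0_3 : Zp 3 (basis8 0) = -basis8 3 := by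
  rw [Zp, b8_0, coordp3, coordp0]
  norm_num
lemma Zb0_4 : Zp 4 (basis8 0) = -basis8 4 := by
  rw [Zp, b8_0, coordp4, coordp0]
  norm_num
lemma Zb0_5 : Zp 5 (basis8 0) = -basis8 5 := by
  rw [Zp, b8_0, coordp5, coordp0]
  norm_num
lemma Zb0_6 : Zp 6 (basis8 0) = -basis8 6 := by
  rw [Zp, b8_0, coordp6, coordp0]
  norm_num
lemma Zb0_7 : Zp 7 (basis8 0) = -basis8 7 := by
  rw [Zp, b8_0, coordp7, coordp0]
  norm_num
lemma Zb_1_1 : Zp 1 (basis8 1) = oone := by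
  rw [Zp, b8_1, coordp1, coordp0]
  norm_num
lemma Zb_1_2 : Zp 1 (basis8 2) = 0 := by
  rw [Zp, b8_2, coordp1, coordp0]
  norm_num
lemma Zb_1_3 : Zp 1 (basis8 3) = 0 := by
  rw [Zp, b8_3, coordp1, coordp0]
  norm_num
lemma Zb_1_4 : Zp 1 (basis8 4) = 0 := by
  rw [Zp, b8_4, coordp1, coordp0]
  norm_num
lemma Zb_1_5 : Zp 1 (basis8 5) = 0 := by
  rw [Zp, b8_5, coordp1, coordp0]
  norm_num
lemma Zb_1_6 : Zp 1 (basis8 6) = 0 := by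
  rw [Zp, b8_6, coordp1, coordp0]
  norm_num
lemma Zb_1_7 : Zp 1 (basis8 7) = 0 := by
  rw [Zp, b8_7, coordp1, coordp0]
  norm_num
lemma Zb_2_1 : Zp 2 (basis8 1) = 0 := by
  rw [Zp, b8_1, coordp2, coordp0]
  norm_num
lemma Zb_2_2 : Zp 2 (basis8 2) = oone := by
  rw [Zp, b8_2, coordp2, coordp0]
  norm_num
lemma Zb_2_3 : Zp 2 (basis8 3) = 0 := by
  rw [Zp, b8_3, coordp2, coordp0]
  norm_num
lemma Zb_2_4 : Zp 2 (basis8 4) = 0 := by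
  rw [Zp, b8_4, coordp2, coordp0]
  norm_num
lemma Zb_2_5 : Zp 2 (basis8 5) = 0 := by
  rw [Zp, b8_5, coordp2, coordp0]
  norm_num
lemma Zb_2_6 : Zp 2 (basis8 6) = 0 := by
  rw [Zp, b8_6, coordp2, coordp0]
  norm_num
lemma Zb_2_7 : Zp 2 (basis8 7) = 0 := by
  rw [Zp, b8_7, coordp2, coordp0]
  norm_num
lemma Zb_3_1 : Zp 3 (basis8 1) = 0 := by
  rw [Zp, b8_1, coordp3, coordp0]
  norm_num
lemma Zb_3_2 : Zp 3 (basis8 2) = 0 := by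
  rw [Zp, b8_2, coordp3, coordp0]
  norm_num
lemma Zb_3_3 : Zp 3 (basis8 3) = oone := by
  rw [Zp, b8_3, coordp3, coordp0]
  norm_num
lemma Zb_3_4 : Zp 3 (basis8 4) = 0 := by
  rw [Zp, b8_4, coordp3, coordp0]
  norm_num
lemma Zb_3_5 : Zp 3 (basis8 5) = 0 := by
  rw [Zp, b8_5, coordp3, coordp0]
  norm_num
lemma Zb_3_6 : Zp 3 (basis8 6) = 0 := by
  rw [Zp, b8_6, coordp3, coordp0]
  norm_num
lemma Zb_3_7 : Zp 3 (basis8 7) = 0 := by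
  rw [Zp, b8_7, coordp3, coordp0]
  norm_num
lemma Zb_4_1 : Zp 4 (basis8 1) = 0 := by
  rw [Zp, b8_1, coordp4, coordp0]
  norm_num
lemma Zb_4_2 : Zp 4 (basis8 2) = 0 := by
  rw [Zp, b8_2, coordp4, coordp0]
  norm_num
lemma Zb_4_3 : Zp 4 (basis8 3) = 0 := by
  rw [Zp, b8_3, coordp4, coordp0]
  norm_num
lemma Zb_4_4 : Zp 4 (basis8 4) = oone := by
  rw [Zp, b8_4, coordp4, coordp0]
  norm_num
lemma Zb_4_5 : Zp 4 (basis8 5) = 0 := by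
  rw [Zp, b8_5, coordp4, coordp0]
  norm_num
lemma Zb_4_6 : Zp 4 (basis8 6) = 0 := by
  rw [Zp, b8_6, coordp4, coordp0]
  norm_num
lemma Zb_4_7 : Zp 4 (basis8 7) = 0 := by
  rw [Zp, b8_7, coordp4, coordp0]
  norm_num
lemma Zb_5_1 : Zp 5 (basis8 1) = 0 := by
  rw [Zp, b8_1, coordp5, coordp0]
  norm_num
lemma Zb_5_2 : Zp 5 (basis8 2) = 0 := by
  rw [Zp, b8_2, coordp5, coordp0]
  norm_num
lemma Zb_5_3 : Zp 5 (basis8 3) = 0 := by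
  rw [Zp, b8_3, coordp5, coordp0]
  norm_num
lemma Zb_5_4 : Zp 5 (basis8 4) = 0 := by
  rw [Zp, b8_4, coordp5, coordp0]
  norm_num
lemma Zb_5_5 : Zp 5 (basis8 5) = oone := by
  rw [Zp, b8_5, coordp5, coordp0]
  norm_num
lemma Zb_5_6 : Zp 5 (basis8 6) = 0 := by
  rw [Zp, b8_6, coordp5, coordp0]
  norm_num
lemma Zb_5_7 : Zp 5 (basis8 7) = 0 := by
  rw [Zp, b8_7, coordp5, coordp0]
  norm_num
lemma Zb_6_1 : Zp 6 (basis8 1) = 0 := by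
  rw [Zp, b8_1, coordp6, coordp0]
  norm_num
lemma Zb_6_2 : Zp 6 (basis8 2) = 0 := by
  rw [Zp, b8_2, coordp6, coordp0]
  norm_num
lemma Zb_6_3 : Zp 6 (basis8 3) = 0 := by
  rw [Zp, b8_3, coordp6, coordp0]
  norm_num
lemma Zb_6_4 : Zp 6 (basis8 4) = 0 := by
  rw [Zp, b8_4, coordp6, coordp0]
  norm_num
lemma Zb_6_5 : Zp 6 (basis8 5) = 0 := by
  rw [Zp, b8_5, coordp6, coordp0]
  norm_num
lemma Zb_6_6 : Zp 6 (basis8 6) = oone := by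
  rw [Zp, b8_6, coordp6, coordp0]
  norm_num
lemma Zb_6_7 : Zp 6 (basis8 7) = 0 := by
  rw [Zp, b8_7, coordp6, coordp0]
  norm_num
lemma Zb_7_1 : Zp 7 (basis8 1) = 0 := by
  rw [Zp, b8_1, coordp7, coordp0]
  norm_num
lemma Zb_7_2 : Zp 7 (basis8 2) = 0 := by
  rw [Zp, b8_2, coordp7, coordp0]
  norm_num
lemma Zb_7_3 : Zp 7 (basis8 3) = 0 := by
  rw [Zp, b8_3, coordp7, coordp0]
  norm_num
lemma Zb_7_4 : Zp 7 (basis8 4) = 0 := by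
  rw [Zp, b8_4, coordp7, coordp0]
  norm_num
lemma Zb_7_5 : Zp 7 (basis8 5) = 0 := by
  rw [Zp, b8_5, coordp7, coordp0]
  norm_num
lemma Zb_7_6 : Zp 7 (basis8 6) = 0 := by
  rw [Zp, b8_6, coordp7, coordp0]
  norm_num
lemma Zb_7_7 : Zp 7 (basis8 7) = oone := by
  rw [Zp, b8_7, coordp7, coordp0]
  norm_num

set_option maxHeartbeats 2000000 in
lemma part2 (z : O) : Dleft (fun w => ∑ i : Fin 7, omul (Zp i.succ w) (Zp i.succ w)) z = 0 := by
  unfold Dleft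
  simp only [fderiv_f]
  simp only [Fin.sum_univ_seven, s0, s1, s2, s3, s4, s5, s6]
  simp only [Zb0_1, Zb0_2, Zb0_3, Zb0_4, Zb0_5, Zb0_6, Zb0_7, Zb_1_1, Zb_1_2, Zb_1_3, Zb_1_4, Zb_1_5, Zb_1_6, Zb_1_7, Zb_2_1, Zb_2_2, Zb_2_3, Zb_2_4, Zb_2_5, Zb_2_6, Zb_2_7, Zb_3_1, Zb_3_2, Zb_3_3, Zb_3_4, Zb_3_5, Zb_3_6, Zb_3_7, Zb_4_1, Zb_4_2, Zb_4_3, Zb_4_4, Zb_4_5, Zb_4_6, Zb_4_7, Zb_5_1, Zb_5_2, Zb_5_3, Zb_5_4, Zb_5_5, Zb_5_6, Zb_5_7, Zb_6_1, Zb_6_2, Zb_6_3, Zb_6_4, Zb_6_5, Zb_6_6, Zb_6_7, Zb_7_1, Zb_7_2, Zb_7_3, Zb_7_4, Zb_7_5, Zb_7_6, Zb_7_7]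
  simp only [omul_zero_left, omul_zero_right, omul_oone_left, omul_oone_right,
    add_zero, zero_add]
  simp only [omul_neg_left, omul_neg_right, omul_add_right]
  simp only [Zp, comm_key]
  abel
end aux2
lemma realkey (x0 x1 x2 x3 x4 x5 x6 x7 : ℝ)
    (h0 : x1^2+x2^2+x3^2+x4^2+x5^2+x6^2+x7^2 - 7*x0^2 = 0)
    (h1 : x0*x1 = 0) (h2 : x0*x2 = 0) (h3 : x0*x3 = 0) (h4 : x0*x4 = 0)
    (h5 : x0*x5 = 0) (h6 : x0*x6 = 0) (h7 : x0*x7 = 0) :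
    x0 = 0 ∧ x1 = 0 ∧ x2 = 0 ∧ x3 = 0 ∧ x4 = 0 ∧ x5 = 0 ∧ x6 = 0 ∧ x7 = 0 := by
  by_cases hx : x0 = 0
  · subst hx
    refine ⟨rfl, ?_, ?_, ?_, ?_, ?_, ?_, ?_⟩ <;>
      nlinarith [sq_nonneg x1, sq_nonneg x2, sq_nonneg x3, sq_nonneg x4, sq_nonneg x5,
        sq_nonneg x6, sq_nonneg x7]
  · exfalso
    have e1 := (mul_eq_zero.mp h1).resolve_left hx
    have e2 := (mul_eq_zero.mp h2).resolve_left hx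
    have e3 := (mul_eq_zero.mp h3).resolve_left hx
    have e4 := (mul_eq_zero.mp h4).resolve_left hx
    have e5 := (mul_eq_zero.mp h5).resolve_left hx
    have e6 := (mul_eq_zero.mp h6).resolve_left hx
    have e7 := (mul_eq_zero.mp h7).resolve_left hx
    subst e1; subst e2; subst e3; subst e4; subst e5; subst e6; subst e7
    have hsq : x0^2 = 0 := by linarith
    exact hx ((pow_eq_zero_iff two_ne_zero).mp hsq)

set_option maxHeartbeats 2000000 in
lemma part3 (z : O) : (∑ i : Fin 7, omul (Zp i.succ z) (Zp i.succ z)) = 0 ↔ z = 0 := by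
  rw [part1]
  obtain ⟨⟨a0,a1,a2,a3⟩, ⟨b0,b1,b2,b3⟩⟩ := z
  simp only [Fin.sum_univ_seven, s0, s1, s2, s3, s4, s5, s6,
    coordp0, coordp1, coordp2, coordp3, coordp4, coordp5, coordp6, coordp7,
    b8_1, b8_2, b8_3, b8_4, b8_5, b8_6, b8_7, oone_expl, osmul, osub, oadd, ozero,
    Prod.mk.injEq, Quaternion.ext_iff]
  rw [Prod.ext_iff, Quaternion.ext_iff, Quaternion.ext_iff,
    Prod.ext_iff, Quaternion.ext_iff, Quaternion.ext_iff]
  dsimp only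
  constructor
  · rintro ⟨⟨h0, h1, h2, h4⟩, h3, h5, h6, h7⟩
    have H0 : a1^2+a2^2+b0^2+a3^2+b1^2+b2^2+b3^2 - 7*a0^2 = 0 := by linear_combination h0
    have H1 : a0*a1 = 0 := by linear_combination (-(1:ℝ)/2) * h1
    have H2 : a0*a2 = 0 := by linear_combination (-(1:ℝ)/2) * h2
    have H3 : a0*b0 = 0 := by linear_combination (-(1:ℝ)/2) * h3
    have H4 : a0*a3 = 0 := by linear_combination (-(1:ℝ)/2) * h4
    have H5 : a0*b1 = 0 := by linear_combination (-(1:ℝ)/2) * h5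
    have H6 : a0*b2 = 0 := by linear_combination (-(1:ℝ)/2) * h6
    have H7 : a0*b3 = 0 := by linear_combination (-(1:ℝ)/2) * h7
    obtain ⟨g0, g1, g2, g3, g4, g5, g6, g7⟩ :=
      realkey a0 a1 a2 b0 a3 b1 b2 b3 H0 H1 H2 H3 H4 H5 H6 H7
    exact ⟨⟨g0, g1, g2, g4⟩, g3, g5, g6, g7⟩
  · rintro ⟨⟨ha0, ha1, ha2, ha3⟩, hb0, hb1, hb2, hb3⟩
    subst ha0; subst ha1; subst ha2; subst ha3
    subst hb0; subst hb1; subst hb2; subst hb3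
    norm_num

/-- f = Z₁² + ⋯ + Z₇² in explicit coordinates; it is left monogenic and its only zero is 0. -/
theorem sum_squares_fueter :
    (∀ z : O, (∑ i : Fin 7, omul (Zp i.succ z) (Zp i.succ z))
        = ((∑ i : Fin 7, coord i.succ z ^ 2) - 7 * coord 0 z ^ 2) • oone
          - ∑ i : Fin 7, (2 * coord 0 z * coord i.succ z) • basis8 i.succ) ∧
    (∀ z : O, Dleft (fun w => ∑ i : Fin 7, omul (Zp i.succ w) (Zp i.succ w)) z = 0) ∧
    (∀ z : O, (∑ i : Fin 7, omul (Zp i.succ z) (Zp i.succ z)) = 0 ↔ z = 0) := by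
  exact ⟨part1, part2, part3⟩
end
end
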